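/- If the deepest node v of the position heap whose path label is a prefix of pattern P has depth d < m = |P|, then every occurrence of P in S at position p satisfies: the node labelled p lies on the path from the root to v and its maximal-reach pointer points exactly to v; moreover P occurs at p if and only if P[1..d] occurs at p via such a node and P[d+1..m] occurs at p+d (recursing on the remainder). -/
import Mathlib


/-- In a position heap for `S`, suppose the deepest node `v`
whose path label is a prefix of the pattern `P` has depth `d < m = |P|`.
Then every occurrence of `P` in `S` at position `p` satisfies: the node
labelled `p` lies on the path from the root to `v` (its path label is a
prefix of `v`'s) and its maximal-reach pointer points exactly to `v`;
moreover, `P` occurs at `p` if and only if `P[1..d]` occurs at `p` via such a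
node (node `p` on the root-to-`v` path with maximal reach `v`) and
`P[d+1..m]` occurs at position `p + d`. -/
theorem positionHeap_search_filter_step
    {α : Type} [DecidableEq α]
    (S T : List α) (c : α) (hS : S = T ++ [c]) (hc : c ∉ T)
    (nodes : Finset (List α)) (lab : List α → ℕ) (nodeOf mrOf : ℕ → List α)
    (hpc : ∀ p ∈ nodes, ∀ q : List α, q <+: p → q ∈ nodes)
    (hbij : Set.BijOn lab ↑nodes (Set.Iic S.length))
    (hroot : ([] : List α) ∈ nodes ∧ lab [] = 0)
    (hheap : ∀ p ∈ nodes, ∀ q ∈ nodes, p <+: q → lab p ≤ lab q)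
    (hpath : ∀ p ∈ nodes, 1 ≤ lab p → p <+: S.drop (lab p - 1))
    (hnodeOf : ∀ i ≤ S.length, nodeOf i ∈ nodes ∧ lab (nodeOf i) = i)
    (hmr : ∀ i : ℕ, 1 ≤ i → i ≤ S.length →
      mrOf i ∈ nodes ∧ mrOf i <+: S.drop (i - 1) ∧
      ∀ q ∈ nodes, q <+: S.drop (i - 1) → q.length ≤ (mrOf i).length)
    (P : List α) (m d : ℕ) (hm : P.length = m)
    (v : List α) (hv : v ∈ nodes) (hvP : v <+: P) (hvd : v.length = d)
    (hvdeep : ∀ q ∈ nodes, q <+: P → q.length ≤ v.length)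
    (hdm : d < m) :
    ∀ p : ℕ, 1 ≤ p → p ≤ S.length →
      (P <+: S.drop (p - 1) →
        nodeOf p <+: v ∧ mrOf p = v) ∧
      (P <+: S.drop (p - 1) ↔
        (nodeOf p <+: v ∧ mrOf p = v ∧ P.take d <+: S.drop (p - 1) ∧
          P.drop d <+: S.drop (p - 1 + d))) := by
  intro p hp1 hp2
  -- forward direction core
  have main : P <+: S.drop (p - 1) → nodeOf p <+: v ∧ mrOf p = v := by
    intro hP
    have hkey : ∀ q ∈ nodes, q <+: S.drop (p - 1) → q <+: P := by
      intro q hq hqS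
      rcases List.prefix_or_prefix_of_prefix hqS hP with h | h
      · exact h
      · exfalso
        have hPn : P ∈ nodes := hpc q hq P h
        have := hvdeep P hPn List.prefix_rfl
        omega
    obtain ⟨hmr1, hmr2, hmr3⟩ := hmr p hp1 hp2
    have hvS : v <+: S.drop (p - 1) := hvP.trans hP
    have h1 : v.length ≤ (mrOf p).length := hmr3 v hv hvS
    have h2 : (mrOf p).length ≤ v.length := hvdeep _ hmr1 (hkey _ hmr1 hmr2)
    have hvm : v <+: mrOf p := List.prefix_of_prefix_length_le hvS hmr2 h1
    have heq : mrOf p = v := (hvm.eq_of_length (by omega)).symm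
    obtain ⟨hn1, hn2⟩ := hnodeOf p hp2
    have hnS : nodeOf p <+: S.drop (p - 1) := by
      have := hpath _ hn1 (by rw [hn2]; omega)
      rwa [hn2] at this
    have hnP : nodeOf p <+: P := hkey _ hn1 hnS
    have hnv : nodeOf p <+: v :=
      List.prefix_of_prefix_length_le hnP hvP (by have := hvdeep _ hn1 hnP; omega)
    exact ⟨hnv, heq⟩
  refine ⟨main, ⟨fun hP => ?_, fun ⟨_, _, ht, hd⟩ => ?_⟩⟩
  · obtain ⟨h1, h2⟩ := main hP
    refine ⟨h1, h2, (List.take_prefix d P).trans hP, ?_⟩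
    have h3 : P.drop d <+: (S.drop (p - 1)).drop d := by
      obtain ⟨t, ht⟩ := hP
      rw [← ht, List.drop_append_of_le_length (by omega)]
      exact ⟨t, rfl⟩
    rwa [List.drop_drop] at h3
  · -- converse: reconstruct P as prefix
    have hd' : d ≤ P.length := by omega
    have hlen : (P.take d).length = d := by rw [List.length_take]; omega
    have htake : (S.drop (p - 1)).take d = P.take d := by
      rw [List.prefix_iff_eq_take.mp ht, hlen]
    have hrest : P.drop d <+: (S.drop (p - 1)).drop d := by
      rw [List.drop_drop]
      exact hd
    have hsplit : S.drop (p - 1) = P.take d ++ (S.drop (p - 1)).drop d := by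
      rw [← htake, List.take_append_drop]
    rw [hsplit]
    conv_lhs => rw [← List.take_append_drop d P]
    obtain ⟨t, ht2⟩ := hrest
    exact ⟨t, by rw [List.append_assoc, ht2]⟩
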